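/- Let K/ℚ be a finite Galois extension, let α ∈ K, let L = K(√α) be a quadratic extension of K, and let L̂ be the Galois closure of L over ℚ. Then the degree [L̂ : K] is a power of 2. -/

import Mathlib

open IntermediateField Polynomial

lemma adjoin_sq_pow_two {F E : Type*} [Field F] [Field E] [Algebra F E]
    (s : Finset E) (hs : ∀ a ∈ s, ∃ c : F, a ^ 2 = algebraMap F E c) :
    ∃ j : ℕ, Module.finrank F (IntermediateField.adjoin F (s : Set E)) = 2 ^ j := by
  classical
  induction s using Finset.induction_on with
  | empty =>
    refine ⟨0, ?_⟩
    simp [IntermediateField.adjoin_empty, IntermediateField.finrank_bot]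
  | @insert a s ha IH =>
    obtain ⟨j, hj⟩ := IH (fun b hb => hs b (Finset.mem_insert_of_mem hb))
    obtain ⟨c, hc⟩ := hs a (Finset.mem_insert_self a s)
    set E1 := IntermediateField.adjoin F (s : Set E) with hE1
    have hins : ((insert a s : Finset E) : Set E) = (s : Set E) ∪ {a} := by
      ext y; simp [or_comm]
    have key : (IntermediateField.adjoin E1 {a}).restrictScalars F
        = IntermediateField.adjoin F (((insert a s : Finset E)) : Set E) := by
      rw [hins, ← IntermediateField.adjoin_adjoin_left]
    -- a is integral over E1 with minpoly of degree ≤ 2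
    have hc1 : a ^ 2 = algebraMap E1 E (algebraMap F E1 c) := by
      rw [← IsScalarTower.algebraMap_apply]; exact hc
    set p : Polynomial E1 := X ^ 2 - C (algebraMap F E1 c) with hp
    have hpm : p.Monic := by
      apply Polynomial.monic_X_pow_sub_C
      norm_num
    have hpe : Polynomial.aeval a p = 0 := by
      simp [hp, ← hc1]
    have hint : IsIntegral E1 a := ⟨p, hpm, hpe⟩
    have hdvd : minpoly E1 a ∣ p := minpoly.dvd E1 a hpe
    have hdeg2 : p.natDegree = 2 := by
      rw [hp]
      compute_degree!
    have hle : (minpoly E1 a).natDegree ≤ 2 := by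
      rw [← hdeg2]; exact Polynomial.natDegree_le_of_dvd hdvd hpm.ne_zero
    have hpos : 0 < (minpoly E1 a).natDegree := minpoly.natDegree_pos hint
    have hfr : Module.finrank E1 (IntermediateField.adjoin E1 ({a} : Set E)) =
        (minpoly E1 a).natDegree := by
      rw [← IntermediateField.adjoin.finrank hint]
    have h0 : Module.finrank F ((IntermediateField.adjoin E1 ({a} : Set E)).restrictScalars F)
        = Module.finrank F (IntermediateField.adjoin E1 ({a} : Set E)) := rfl
    have hmul := (Module.finrank_mul_finrank F E1
      (IntermediateField.adjoin E1 ({a} : Set E))).symm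
    rw [← key, h0, hmul, hj, hfr]
    interval_cases h : (minpoly E1 a).natDegree
    · exact ⟨j, by ring⟩
    · exact ⟨j + 1, by ring⟩

open IntermediateField Polynomial

theorem galois_aux
    (F K L A : Type*) [Field F] [Field K] [Field L] [Field A]
    [Algebra F K] [Algebra F L] [Algebra K L] [Algebra F A] [Algebra K A] [Algebra L A]
    [IsScalarTower F K L] [IsScalarTower F K A] [IsScalarTower F L A] [IsScalarTower K L A]
    [FiniteDimensional F K] [Normal F K]
    (α : K) (x : L) (hx : x ^ 2 = algebraMap K L α)
    (hgen : IntermediateField.adjoin K {x} = ⊤) (hdeg : Module.finrank K L = 2) :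
    ∃ j : ℕ, Module.finrank F ↥(normalClosure F L A) =
      2 ^ j * Module.finrank F K := by
  haveI : FiniteDimensional K L := Module.finite_of_finrank_pos (by omega)
  haveI : FiniteDimensional F L := Module.Finite.trans K L
  set ι : K →ₐ[F] A := IsScalarTower.toAlgHom F K A with hι
  set Kf : IntermediateField F A := ι.fieldRange with hKf
  let e : K ≃ₐ[F] Kf := AlgEquiv.ofInjectiveField ι
  haveI : Normal F Kf := Normal.of_algEquiv e
  -- every F-embedding of K into A has range Kf
  have claim1 : ∀ g : K →ₐ[F] A, g.fieldRange = Kf := by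
    intro g
    have h1 : (g.comp (e.symm : Kf →ₐ[F] K)).fieldRange = Kf :=
      AlgHom.fieldRange_of_normal _
    rw [← h1]
    ext y
    simp only [AlgHom.mem_fieldRange, AlgHom.comp_apply]
    constructor
    · rintro ⟨k, rfl⟩; exact ⟨e k, congrArg g (e.symm_apply_apply k)⟩
    · rintro ⟨k, rfl⟩; exact ⟨e.symm k, rfl⟩
  -- describe ⊤ : IntermediateField F L
  set K0 : IntermediateField F L := (IsScalarTower.toAlgHom F K L).fieldRange with hK0
  let e0 : K ≃ₐ[F] K0 := AlgEquiv.ofInjectiveField (IsScalarTower.toAlgHom F K L)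
  have hi0 : algebraMap K L = (algebraMap K0 L) ∘ e0 := by
    funext k; rfl
  have hgen' : (⊤ : IntermediateField F L) = adjoin F ((K0 : Set L) ∪ {x}) := by
    rw [← IntermediateField.restrictScalars_adjoin F K0 ({x} : Set L),
      ← IntermediateField.restrictScalars_adjoin_of_algEquiv e0 hi0 ({x} : Set L),
      hgen, restrictScalars_top]
  -- every F-embedding of L into A has range Kf ⊔ F(f x)
  have claim2 : ∀ f : L →ₐ[F] A, f.fieldRange = Kf ⊔ adjoin F {f x} := by
    intro f
    have himg : f '' (K0 : Set L) = Set.range (f.comp (IsScalarTower.toAlgHom F K L)) := by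
      ext y
      constructor
      · rintro ⟨z, ⟨k, rfl⟩, rfl⟩; exact ⟨k, rfl⟩
      · rintro ⟨k, rfl⟩; exact ⟨algebraMap K L k, ⟨k, rfl⟩, rfl⟩
    have hadj : adjoin F (Set.range (f.comp (IsScalarTower.toAlgHom F K L))) =
        (f.comp (IsScalarTower.toAlgHom F K L)).fieldRange := by
      apply le_antisymm
      · rw [IntermediateField.adjoin_le_iff]
        rintro y ⟨k, rfl⟩
        exact ⟨k, rfl⟩
      · rintro y ⟨k, rfl⟩
        exact IntermediateField.subset_adjoin F _ ⟨k, rfl⟩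
    rw [AlgHom.fieldRange_eq_map, hgen', IntermediateField.adjoin_map,
      Set.image_union, Set.image_singleton, IntermediateField.adjoin_union,
      himg, hadj, claim1]
  set T : Set A := Set.range (fun f : L →ₐ[F] A => f x) with hT
  have hTfin : T.Finite := Set.finite_range _
  have claim3 : normalClosure F L A = restrictScalars F (adjoin Kf T) := by
    haveI : Nonempty (L →ₐ[F] A) := ⟨IsScalarTower.toAlgHom F L A⟩
    rw [IntermediateField.restrictScalars_adjoin_eq_sup, normalClosure_def]
    simp_rw [claim2]
    rw [iSup_sup_eq, iSup_const, hT, ← Set.iUnion_singleton_eq_range,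
      IntermediateField.adjoin_iUnion]
  -- the square of each generator lies in Kf
  have hsq : ∀ a ∈ hTfin.toFinset, ∃ c : Kf, a ^ 2 = algebraMap Kf A c := by
    intro a ha
    rw [Set.Finite.mem_toFinset, hT] at ha
    obtain ⟨f, rfl⟩ := ha
    have : (f x) ^ 2 = (f.comp (IsScalarTower.toAlgHom F K L)) α := by
      rw [← map_pow, hx]; rfl
    have hmem : (f.comp (IsScalarTower.toAlgHom F K L)) α ∈ Kf := by
      rw [← claim1 (f.comp (IsScalarTower.toAlgHom F K L))]
      exact ⟨α, rfl⟩
    exact ⟨⟨_, hmem⟩, this⟩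
  obtain ⟨j, hj⟩ := adjoin_sq_pow_two (F := Kf) (E := A) hTfin.toFinset hsq
  rw [hTfin.coe_toFinset] at hj
  have hrank : Module.finrank F ↥(normalClosure F L A) =
      Module.finrank F Kf * Module.finrank Kf (adjoin Kf T) := by
    have h0 : Module.finrank F ↥(restrictScalars F (adjoin (↥Kf) T)) =
        Module.finrank F ↥(adjoin (↥Kf) T) := rfl
    rw [claim3, h0]
    exact (Module.finrank_mul_finrank F ↥Kf ↥(adjoin (↥Kf) T)).symm
  have hKr : Module.finrank F Kf = Module.finrank F K := e.symm.toLinearEquiv.finrank_eq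
  refine ⟨j, ?_⟩
  rw [hrank, hj, hKr, mul_comm]
/-- If `K/ℚ` is finite Galois, `α ∈ K`, and `L = K(√α)` is a quadratic extension of `K`,
then the degree over `K` of the Galois closure `L̂` of `L` over `ℚ` is a power of `2`. -/
theorem galoisClosure_degree_pow_two
    (K L : Type*) [Field K] [Field L] [Algebra ℚ K] [Algebra ℚ L] [Algebra K L]
    [IsScalarTower ℚ K L] [FiniteDimensional ℚ K] [IsGalois ℚ K]
    (α : K) (x : L) (hx : x ^ 2 = algebraMap K L α)
    (hgen : IntermediateField.adjoin K {x} = ⊤) (hdeg : Module.finrank K L = 2) :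
    ∃ j : ℕ, Module.finrank ℚ ↥(normalClosure ℚ L (AlgebraicClosure L)) =
      2 ^ j * Module.finrank ℚ K := by
  have tower : @IsScalarTower ℚ K (AlgebraicClosure L) _
      (Algebra.toSMul (A := AlgebraicClosure L)) (Algebra.toSMul (A := AlgebraicClosure L)) :=
    IsScalarTower.of_algebraMap_eq' (by
      rw [IsScalarTower.algebraMap_eq ℚ L (AlgebraicClosure L),
        IsScalarTower.algebraMap_eq ℚ K L, ← RingHom.comp_assoc,
        ← IsScalarTower.algebraMap_eq K L (AlgebraicClosure L)])
  exact @galois_aux ℚ K L (AlgebraicClosure L) _ _ _ _ _ _ _ _ _ _ _ tower _ _ _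
    IsGalois.to_normal α x hx hgen hdeg
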